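/- arXiv:2209.04676 — 3 statements merged into one kernel-verified Lean document; each statement's English description precedes it below -/
import Mathlib

section
/- Let γ ∈ (0,1], σ > 3, α ∈ [0,1/2), θ₁ > 0 and C₀ > 0. There is a constant C > 0, depending only on γ, σ, α, θ₁ and C₀, with the following property. For each k ∈ ℤ³ with k ≠ 0 let K_k, a_k, w_k, ρ_k : [0,∞) → ℂ be continuous functions such that |K_k(τ)| ≤ C₀·exp(−θ₁·|k|·τ) for all τ ≥ 0 and such that for all t ≥ 0, ρ_k(t) = a_k(t) + ∫₀^t K_k(t−s)·a_k(s) ds − ∫₀^t K_k(t−s)·w_k(s) ds. Assume that for every s ≥ 0 the quantities F_a(s) := sup_{k ≠ 0} exp(z⟨k,ks⟩^γ)·⟨k,ks⟩^σ·|k|^{−α}·|a_k(s)| and F_w(s) := sup_{k ≠ 0} exp(z⟨k,ks⟩^γ)·⟨k,ks⟩^σ·|k|^{−α}·|w_k(s)| are finite, where z ∈ [0, θ₁/2]. Then for every t ≥ 0, sup_{k ≠ 0} exp(z⟨k,kt⟩^γ)·⟨k,kt⟩^σ·|k|^{−α}·|ρ_k(t)| ≤ C·sup_{0 ≤ s ≤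 t} F_a(s) + C·sup_{0 ≤ s ≤ t} F_w(s). -/
/-- Euclidean norm of a lattice point `k ∈ ℤ³`, viewed as a vector of `ℝ³`. -/
noncomputable def knorm (k : Fin 3 → ℤ) : ℝ := Real.sqrt (∑ i, ((k i : ℝ)) ^ 2)

/-- Japanese bracket `⟨k, kt⟩ = √(1 + |k|² + |kt|²)`. -/
noncomputable def jb (k : Fin 3 → ℤ) (t : ℝ) : ℝ :=
  Real.sqrt (1 + (∑ i, ((k i : ℝ)) ^ 2) + (∑ i, (t * (k i : ℝ)) ^ 2))

/-- The weight `exp(z⟨k,kt⟩^γ)·⟨k,kt⟩^σ·|k|^{-α}` of the generator function `F`. -/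
noncomputable def W (γ σ α z t : ℝ) (k : Fin 3 → ℤ) : ℝ :=
  Real.exp (z * jb k t ^ γ) * jb k t ^ σ * knorm k ^ (-α)

lemma sum_sq_nonneg (k : Fin 3 → ℤ) : 0 ≤ ∑ i, ((k i : ℝ)) ^ 2 := by positivity

lemma knorm_ge_one {k : Fin 3 → ℤ} (hk : k ≠ 0) : 1 ≤ knorm k := by
  rw [knorm, Real.one_le_sqrt]
  obtain ⟨i, hi⟩ := Function.ne_iff.mp hk
  have hki : k i ≠ 0 := by simpa using hi
  have h1 : (1 : ℝ) ≤ ((k i : ℝ)) ^ 2 := by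
    have h : 1 ≤ |k i| := Int.one_le_abs hki
    have h' : (1:ℝ) ≤ |(k i : ℝ)| := by exact_mod_cast (by exact_mod_cast h : (1:ℝ) ≤ ((|k i| : ℤ) : ℝ))
    nlinarith [sq_abs ((k i : ℝ))]
  calc (1:ℝ) ≤ ((k i : ℝ))^2 := h1
    _ ≤ ∑ j, ((k j : ℝ))^2 :=
      Finset.single_le_sum (f := fun j => ((k j : ℝ))^2) (fun j _ => by positivity) (Finset.mem_univ i)

lemma jb_ge_one (k : Fin 3 → ℤ) (t : ℝ) : 1 ≤ jb k t := by
  rw [jb, Real.one_le_sqrt]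
  nlinarith [sum_sq_nonneg k, sq_nonneg t, Finset.sum_nonneg (fun i (_ : i ∈ Finset.univ) => sq_nonneg (t * (k i : ℝ)))]

lemma jb_eq (k : Fin 3 → ℤ) (t : ℝ) :
    jb k t = Real.sqrt (1 + (∑ i, ((k i : ℝ)) ^ 2) + t ^ 2 * ∑ i, ((k i : ℝ)) ^ 2) := by
  rw [jb, Finset.mul_sum]
  congr 2
  exact Finset.sum_congr rfl fun i _ => by ring

lemma jb_le (k : Fin 3 → ℤ) {s t : ℝ} (hs : 0 ≤ s) (hst : s ≤ t) :
    jb k t ≤ jb k s + knorm k * (t - s) := by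
  rw [jb_eq, jb_eq, knorm]
  set N := ∑ i, ((k i : ℝ)) ^ 2 with hNdef
  have hN : 0 ≤ N := sum_sq_nonneg k
  have hA : (0:ℝ) ≤ 1 + N + s ^ 2 * N := by positivity
  have h1 : Real.sqrt N ^ 2 = N := Real.sq_sqrt hN
  have h2 : Real.sqrt (1 + N + s^2*N) ^ 2 = 1 + N + s^2*N := Real.sq_sqrt hA
  have h3 : s * Real.sqrt N ≤ Real.sqrt (1 + N + s^2*N) := by
    rw [Real.le_sqrt (by positivity) hA]
    nlinarith [h1]
  have hnn : 0 ≤ Real.sqrt (1 + N + s^2*N) + Real.sqrt N * (t - s) := by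
    have := Real.sqrt_nonneg (1 + N + s^2*N); have := Real.sqrt_nonneg N; nlinarith
  have key : 1 + N + t^2*N ≤ (Real.sqrt (1 + N + s^2*N) + Real.sqrt N * (t - s))^2 := by
    nlinarith [mul_le_mul_of_nonneg_left h3 (mul_nonneg (sub_nonneg.2 hst) (Real.sqrt_nonneg N)),
      Real.sqrt_nonneg N, Real.sqrt_nonneg (1 + N + s^2*N)]
  calc Real.sqrt (1 + N + t^2*N) ≤ Real.sqrt ((Real.sqrt (1 + N + s^2*N) + Real.sqrt N * (t - s))^2) :=
        Real.sqrt_le_sqrt key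
    _ = _ := Real.sqrt_sq hnn

lemma rpow_add_le {x y γ : ℝ} (hx : 0 ≤ x) (hy : 0 ≤ y) (hγ0 : 0 ≤ γ) (hγ1 : γ ≤ 1) :
    (x + y) ^ γ ≤ x ^ γ + y ^ γ := by
  have h := NNReal.rpow_add_le_add_rpow x.toNNReal y.toNNReal hγ0 hγ1
  have := NNReal.coe_le_coe.mpr h
  push_cast [NNReal.coe_rpow, Real.coe_toNNReal x hx, Real.coe_toNNReal y hy] at this
  simpa using this

noncomputable def Mc (σ θ₁ : ℝ) : ℝ :=
  (Nat.factorial (Nat.ceil σ) : ℝ) * (4 / θ₁) ^ (Nat.ceil σ) * Real.exp (θ₁ / 4)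

lemma Mc_pos (σ : ℝ) {θ₁ : ℝ} (hθ : 0 < θ₁) : 0 < Mc σ θ₁ := by
  have h : (0:ℝ) < (Nat.factorial (Nat.ceil σ) : ℝ) := by exact_mod_cast (Nat.ceil σ).factorial_pos
  unfold Mc; positivity

lemma one_add_pow_le {θ₁ x σ : ℝ} (hθ : 0 < θ₁) (hx : 0 ≤ x) (hσ : 0 ≤ σ) :
    (1 + x) ^ σ ≤ Mc σ θ₁ * Real.exp (θ₁ / 4 * x) := by
  set n := Nat.ceil σ with hn
  have h1 : (1 + x) ^ σ ≤ (1 + x) ^ (n : ℝ) :=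
    Real.rpow_le_rpow_of_exponent_le (by linarith) (Nat.le_ceil σ)
  rw [Real.rpow_natCast] at h1
  have h2 := Real.pow_div_factorial_le_exp (θ₁ / 4 * (1 + x)) (by positivity) n
  have hfac : (0:ℝ) < (Nat.factorial n : ℝ) := by exact_mod_cast n.factorial_pos
  have h3 : (1 + x) ^ n ≤ (Nat.factorial n : ℝ) * (4 / θ₁) ^ n * Real.exp (θ₁ / 4 * (1 + x)) := by
    rw [mul_pow, div_le_iff₀ hfac] at h2
    have hcoef : ((θ₁ / 4) ^ n) * ((4 / θ₁) ^ n) = 1 := by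
      rw [← mul_pow]; field_simp; exact one_pow n
    calc (1 + x) ^ n = ((θ₁/4) ^ n * (1+x) ^ n) * (4/θ₁) ^ n := by
          rw [mul_comm ((θ₁/4)^n), mul_assoc, hcoef, mul_one]
      _ ≤ (Real.exp (θ₁/4*(1+x)) * (Nat.factorial n : ℝ)) * (4/θ₁) ^ n := by
          apply mul_le_mul_of_nonneg_right h2 (by positivity)
      _ = (Nat.factorial n : ℝ) * (4 / θ₁) ^ n * Real.exp (θ₁ / 4 * (1 + x)) := by ring
  have hexp : Real.exp (θ₁/4*(1+x)) = Real.exp (θ₁/4) * Real.exp (θ₁/4*x) := by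
    rw [← Real.exp_add]; congr 1; ring
  calc (1 + x) ^ σ ≤ (1+x)^n := h1
    _ ≤ (Nat.factorial n : ℝ) * (4 / θ₁) ^ n * Real.exp (θ₁ / 4 * (1 + x)) := h3
    _ = Mc σ θ₁ * Real.exp (θ₁/4*x) := by rw [hexp, Mc]; ring

lemma W_nonneg (γ σ α z s : ℝ) (k : Fin 3 → ℤ) : 0 ≤ W γ σ α z s k := by
  unfold W
  have h1 : 0 ≤ jb k s := le_trans zero_le_one (jb_ge_one k s)
  have h2 : (0:ℝ) ≤ Real.sqrt (∑ i, ((k i : ℝ)) ^ 2) := Real.sqrt_nonneg _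
  positivity

lemma W_pos {γ σ α z s : ℝ} {k : Fin 3 → ℤ} (hk : k ≠ 0) : 0 < W γ σ α z s k := by
  unfold W
  have h1 : (0:ℝ) < jb k s := lt_of_lt_of_le zero_lt_one (jb_ge_one k s)
  have h2 : (0:ℝ) < knorm k := lt_of_lt_of_le zero_lt_one (knorm_ge_one hk)
  positivity

lemma weight_decay {γ σ α θ₁ z : ℝ} (hγ0 : 0 < γ) (hγ1 : γ ≤ 1) (hσ : 0 ≤ σ) (hα0 : 0 ≤ α)
    (hθ : 0 < θ₁) (hz0 : 0 ≤ z) (hz : z ≤ θ₁ / 2) {k : Fin 3 → ℤ} (hk : k ≠ 0)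
    {s t : ℝ} (hs : 0 ≤ s) (hst : s ≤ t) :
    W γ σ α z t k * Real.exp (-θ₁ * knorm k * (t - s)) ≤
      (Real.exp (θ₁ / 2) * Mc σ θ₁) * Real.exp (-(θ₁ / 4) * (t - s)) * W γ σ α z s k := by
  have hN1 : 1 ≤ knorm k := knorm_ge_one hk
  set N := knorm k with hNd
  set x := N * (t - s) with hxd
  have hx : 0 ≤ x := mul_nonneg (by linarith) (by linarith)
  have hxts : t - s ≤ x := by nlinarith
  have hjbs1 : 1 ≤ jb k s := jb_ge_one k s
  have hjbt0 : (0:ℝ) ≤ jb k t := le_trans zero_le_one (jb_ge_one k t)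
  have hA : jb k t ≤ jb k s + x := jb_le k hs hst
  have hBγ : jb k t ^ γ ≤ jb k s ^ γ + x ^ γ :=
    le_trans (Real.rpow_le_rpow hjbt0 hA hγ0.le) (rpow_add_le (by linarith) hx hγ0.le hγ1)
  have hC : x ^ γ ≤ 1 + x := by
    rcases le_total x 1 with h | h
    · have := Real.rpow_le_one hx h hγ0.le; linarith
    · have h2 : x ^ γ ≤ x ^ (1:ℝ) := Real.rpow_le_rpow_of_exponent_le h hγ1
      rw [Real.rpow_one] at h2; linarith
  have hD : z * jb k t ^ γ ≤ z * jb k s ^ γ + (θ₁ / 2 + θ₁ / 2 * x) := by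
    have h1 := mul_le_mul_of_nonneg_left hBγ hz0
    have h2 := mul_le_mul_of_nonneg_left hC hz0
    have h3 := mul_le_mul_of_nonneg_right hz (by linarith : (0:ℝ) ≤ 1 + x)
    nlinarith
  have hE : jb k t ≤ jb k s * (1 + x) := by nlinarith
  have hF : jb k t ^ σ ≤ jb k s ^ σ * (1 + x) ^ σ := by
    calc jb k t ^ σ ≤ (jb k s * (1 + x)) ^ σ := Real.rpow_le_rpow hjbt0 hE hσ
      _ = _ := Real.mul_rpow (by linarith) (by linarith)
  have hG : (1 + x) ^ σ ≤ Mc σ θ₁ * Real.exp (θ₁ / 4 * x) := one_add_pow_le hθ hx hσ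
  have hNα : (0:ℝ) ≤ N ^ (-α) := Real.rpow_nonneg (by linarith) _
  have e1 : Real.exp (z * jb k t ^ γ) ≤ Real.exp (z * jb k s ^ γ) * Real.exp (θ₁/2 + θ₁/2*x) := by
    rw [← Real.exp_add]; exact Real.exp_le_exp.mpr (by linarith)
  have e2 : jb k t ^ σ ≤ jb k s ^ σ * (Mc σ θ₁ * Real.exp (θ₁/4*x)) :=
    hF.trans (mul_le_mul_of_nonneg_left hG (Real.rpow_nonneg (by linarith) _))
  have hW : W γ σ α z t k ≤
      Real.exp (z * jb k s ^ γ) * Real.exp (θ₁/2 + θ₁/2*x) *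
        (jb k s ^ σ * (Mc σ θ₁ * Real.exp (θ₁/4*x))) * N ^ (-α) := by
    unfold W
    have hMc := (Mc_pos σ hθ).le
    apply mul_le_mul _ le_rfl hNα
      (mul_nonneg (mul_nonneg (Real.exp_nonneg _) (Real.exp_nonneg _))
        (mul_nonneg (Real.rpow_nonneg (by linarith) _) (mul_nonneg hMc (Real.exp_nonneg _))))
    exact mul_le_mul e1 e2 (Real.rpow_nonneg hjbt0 _) (by positivity)
  have hexpx : Real.exp (-θ₁ * N * (t - s)) = Real.exp (-(θ₁ * x)) := by congr 1; rw [hxd]; ring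
  have eexp : Real.exp (θ₁/2 + θ₁/2*x) * Real.exp (θ₁/4*x) * Real.exp (-(θ₁*x)) =
      Real.exp (θ₁/2) * Real.exp (-(θ₁/4)*x) := by
    rw [← Real.exp_add, ← Real.exp_add, ← Real.exp_add]; congr 1; ring
  calc W γ σ α z t k * Real.exp (-θ₁ * N * (t - s))
      ≤ (Real.exp (z * jb k s ^ γ) * Real.exp (θ₁/2 + θ₁/2*x) *
          (jb k s ^ σ * (Mc σ θ₁ * Real.exp (θ₁/4*x))) * N ^ (-α)) * Real.exp (-(θ₁*x)) := by
        rw [hexpx]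
        exact mul_le_mul_of_nonneg_right hW (Real.exp_nonneg _)
    _ = (Real.exp (θ₁/2 + θ₁/2*x) * Real.exp (θ₁/4*x) * Real.exp (-(θ₁*x))) *
          (Mc σ θ₁ * (Real.exp (z * jb k s ^ γ) * jb k s ^ σ * N ^ (-α))) := by ring
    _ = (Real.exp (θ₁/2) * Mc σ θ₁) * Real.exp (-(θ₁/4)*x) * W γ σ α z s k := by
        rw [eexp, W]; ring
    _ ≤ _ := by
        apply mul_le_mul_of_nonneg_right _ (W_nonneg γ σ α z s k)
        apply mul_le_mul_of_nonneg_left _ (mul_nonneg (Real.exp_nonneg _) (Mc_pos σ hθ).le)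
        exact Real.exp_le_exp.mpr (by nlinarith)

lemma exp_int {c : ℝ} (hc : 0 < c) (t : ℝ) :
    ∫ s in (0:ℝ)..t, Real.exp (-c * (t - s)) = (1 - Real.exp (-c * t)) / c := by
  have hcont : Continuous fun u : ℝ => Real.exp (-c * u) := by continuity
  have hcomp := intervalIntegral.integral_comp_sub_left (fun u => Real.exp (-c * u)) t
      (a := 0) (b := t)
  rw [hcomp, sub_self, sub_zero]
  have hne : c ≠ 0 := hc.ne'
  have hd : ∀ u ∈ Set.uIcc (0:ℝ) t,
      HasDerivAt (fun u => -(Real.exp (-c * u) / c)) (Real.exp (-c * u)) u := by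
    intro u _
    have h1 : HasDerivAt (fun u : ℝ => -c * u) (-c) u := by
      simpa using (hasDerivAt_id u).const_mul (-c)
    have h3 := (h1.exp.div_const c).neg
    rw [mul_neg, neg_div, neg_neg, mul_div_assoc, div_self hne, mul_one] at h3
    exact h3
  rw [intervalIntegral.integral_eq_sub_of_hasDerivAt hd (hcont.intervalIntegrable _ _)]
  simp [Real.exp_zero]
  ring

lemma int_bound {γ σ α θ₁ C₀ z : ℝ} (hγ0 : 0 < γ) (hγ1 : γ ≤ 1) (hσ : 0 ≤ σ) (hα0 : 0 ≤ α)
    (hθ : 0 < θ₁) (hC₀ : 0 < C₀) (hz0 : 0 ≤ z) (hz : z ≤ θ₁ / 2)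
    (K f : ℝ → ℂ) {k : Fin 3 → ℤ} (hk : k ≠ 0) {t : ℝ} (ht : 0 ≤ t)
    (hKc : ContinuousOn K (Set.Ici 0)) (hfc : ContinuousOn f (Set.Ici 0))
    (hK : ∀ τ : ℝ, 0 ≤ τ → ‖K τ‖ ≤ C₀ * Real.exp (-θ₁ * knorm k * τ))
    {S : ℝ} (hS0 : 0 ≤ S)
    (hf : ∀ s ∈ Set.Icc (0:ℝ) t, W γ σ α z s k * ‖f s‖ ≤ S) :
    W γ σ α z t k * ‖∫ s in (0:ℝ)..t, K (t - s) * f s‖ ≤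
      (Real.exp (θ₁ / 2) * Mc σ θ₁ * C₀ * (4 / θ₁)) * S := by
  set B := Real.exp (θ₁ / 2) * Mc σ θ₁ with hBd
  have hB : 0 < B := mul_pos (Real.exp_pos _) (Mc_pos σ hθ)
  set Wt := W γ σ α z t k with hWtd
  have hWt : 0 < Wt := W_pos hk
  set D := B * C₀ * S / Wt with hDd
  have hD0 : 0 ≤ D := div_nonneg (mul_nonneg (mul_nonneg hB.le hC₀.le) hS0) hWt.le
  have hae : ∀ᵐ s ∂(MeasureTheory.volume.restrict (Set.uIoc (0:ℝ) t)),
      ‖K (t - s) * f s‖ ≤ D * Real.exp (-(θ₁ / 4) * (t - s)) := by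
    filter_upwards [MeasureTheory.ae_restrict_mem measurableSet_uIoc] with s hs
    rw [Set.uIoc_of_le ht] at hs
    have hs0 : 0 ≤ s := hs.1.le
    have hst : s ≤ t := hs.2
    have h1 : ‖K (t - s) * f s‖ ≤ (C₀ * Real.exp (-θ₁ * knorm k * (t - s))) * ‖f s‖ := by
      rw [norm_mul]
      exact mul_le_mul_of_nonneg_right (hK _ (by linarith)) (norm_nonneg _)
    have h2 : Wt * ‖K (t - s) * f s‖ ≤ B * C₀ * S * Real.exp (-(θ₁ / 4) * (t - s)) := by
      calc Wt * ‖K (t - s) * f s‖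
          ≤ Wt * ((C₀ * Real.exp (-θ₁ * knorm k * (t - s))) * ‖f s‖) :=
            mul_le_mul_of_nonneg_left h1 hWt.le
        _ = C₀ * (Wt * Real.exp (-θ₁ * knorm k * (t - s))) * ‖f s‖ := by ring
        _ ≤ C₀ * (B * Real.exp (-(θ₁/4) * (t - s)) * W γ σ α z s k) * ‖f s‖ := by
            apply mul_le_mul_of_nonneg_right _ (norm_nonneg _)
            exact mul_le_mul_of_nonneg_left
              (weight_decay hγ0 hγ1 hσ hα0 hθ hz0 hz hk hs0 hst) hC₀.le
        _ = (C₀ * B * Real.exp (-(θ₁/4) * (t - s))) * (W γ σ α z s k * ‖f s‖) := by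
            ring
        _ ≤ (C₀ * B * Real.exp (-(θ₁/4) * (t - s))) * S := by
            apply mul_le_mul_of_nonneg_left (hf s ⟨hs0, hst⟩)
            exact mul_nonneg (mul_nonneg hC₀.le hB.le) (Real.exp_nonneg _)
        _ = B * C₀ * S * Real.exp (-(θ₁/4) * (t - s)) := by ring
    rw [hDd, div_mul_eq_mul_div, le_div_iff₀ hWt]
    nlinarith [h2]
  have hint : IntervalIntegrable (fun s => D * Real.exp (-(θ₁ / 4) * (t - s)))
      MeasureTheory.volume 0 t := (Continuous.intervalIntegrable (by continuity) _ _)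
  have hnorm := intervalIntegral.norm_integral_le_abs_of_norm_le hae hint
  have hc4 : (0:ℝ) < θ₁ / 4 := by linarith
  have hval : ∫ s in (0:ℝ)..t, D * Real.exp (-(θ₁/4) * (t - s)) =
      D * ((1 - Real.exp (-(θ₁/4) * t)) / (θ₁/4)) := by
    rw [intervalIntegral.integral_const_mul, exp_int hc4 t]
  have hexple : Real.exp (-(θ₁/4) * t) ≤ 1 := by
    rw [Real.exp_le_one_iff]; nlinarith
  have habs : |∫ s in (0:ℝ)..t, D * Real.exp (-(θ₁/4) * (t - s))| ≤ D * (4 / θ₁) := by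
    have h44 : (4 / θ₁) * (θ₁ / 4) = 1 := by field_simp
    rw [hval, abs_of_nonneg (mul_nonneg hD0 (div_nonneg (by linarith) hc4.le))]
    apply mul_le_mul_of_nonneg_left _ hD0
    rw [div_le_iff₀ hc4, h44]
    linarith [Real.exp_nonneg (-(θ₁/4) * t)]
  have hfin : ‖∫ s in (0:ℝ)..t, K (t - s) * f s‖ ≤ D * (4 / θ₁) := hnorm.trans habs
  calc Wt * ‖∫ s in (0:ℝ)..t, K (t - s) * f s‖
      ≤ Wt * (D * (4 / θ₁)) := by
        apply mul_le_mul_of_nonneg_left _ hWt.le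
        exact hfin
    _ = (B * C₀ * (4 / θ₁)) * S := by rw [hDd]; field_simp
    _ = (Real.exp (θ₁ / 2) * Mc σ θ₁ * C₀ * (4 / θ₁)) * S := by rw [hBd]

/-- Linear density estimate: from the resolvent representation
`ρ_k(t) = a_k(t) + ∫₀^t K_k(t−s)a_k(s)ds − ∫₀^t K_k(t−s)w_k(s)ds` and the decay of `K_k`,
the weighted sup of `ρ` is controlled by those of `a` and `w`. -/
theorem linear_density_estimate {γ σ α θ₁ C₀ : ℝ} (hγ0 : 0 < γ) (hγ1 : γ ≤ 1)
    (hσ : 3 < σ) (hα0 : 0 ≤ α) (hα : α < 1 / 2) (hθ : 0 < θ₁) (hC₀ : 0 < C₀) :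
    ∃ C : ℝ, 0 < C ∧
      ∀ (K a w ρ : (Fin 3 → ℤ) → ℝ → ℂ) (z : ℝ), 0 ≤ z → z ≤ θ₁ / 2 →
        (∀ k : Fin 3 → ℤ, k ≠ 0 →
          ContinuousOn (K k) (Set.Ici 0) ∧ ContinuousOn (a k) (Set.Ici 0) ∧
            ContinuousOn (w k) (Set.Ici 0) ∧ ContinuousOn (ρ k) (Set.Ici 0)) →
        (∀ k : Fin 3 → ℤ, k ≠ 0 → ∀ τ : ℝ, 0 ≤ τ →
          ‖K k τ‖ ≤ C₀ * Real.exp (-θ₁ * knorm k * τ)) →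
        (∀ k : Fin 3 → ℤ, k ≠ 0 → ∀ t : ℝ, 0 ≤ t →
          ρ k t = a k t + (∫ s in (0 : ℝ)..t, K k (t - s) * a k s) -
            ∫ s in (0 : ℝ)..t, K k (t - s) * w k s) →
        ∀ t : ℝ, 0 ≤ t → ∀ Sa Sw : ℝ,
          (∀ s ∈ Set.Icc (0 : ℝ) t, ∀ k : Fin 3 → ℤ, k ≠ 0 →
            W γ σ α z s k * ‖a k s‖ ≤ Sa) →
          (∀ s ∈ Set.Icc (0 : ℝ) t, ∀ k : Fin 3 → ℤ, k ≠ 0 →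
            W γ σ α z s k * ‖w k s‖ ≤ Sw) →
          ∀ k : Fin 3 → ℤ, k ≠ 0 →
            W γ σ α z t k * ‖ρ k t‖ ≤ C * Sa + C * Sw := by
  set D := Real.exp (θ₁ / 2) * Mc σ θ₁ * C₀ * (4 / θ₁) with hDd
  have hD0 : 0 < D := by
    have := Mc_pos σ hθ
    have := Real.exp_pos (θ₁ / 2)
    positivity
  refine ⟨1 + D, by linarith, ?_⟩
  intro K a w ρ z hz0 hz hcont hK hres t ht Sa Sw ha hw k hk
  obtain ⟨hKc, hac, hwc, -⟩ := hcont k hk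
  have hWt : 0 < W γ σ α z t k := W_pos hk
  have hWa : W γ σ α z t k * ‖a k t‖ ≤ Sa := ha t ⟨ht, le_refl t⟩ k hk
  have hSa0 : 0 ≤ Sa :=
    le_trans (mul_nonneg (W_nonneg γ σ α z t k) (norm_nonneg _)) hWa
  have hSw0 : 0 ≤ Sw :=
    le_trans (mul_nonneg (W_nonneg γ σ α z t k) (norm_nonneg _)) (hw t ⟨ht, le_refl t⟩ k hk)
  have hσ0 : (0:ℝ) ≤ σ := by linarith
  have hI1 := int_bound hγ0 hγ1 hσ0 hα0 hθ hC₀ hz0 hz (K k) (a k) hk ht hKc hac (hK k hk)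
      hSa0 (fun s hs => ha s hs k hk)
  have hI2 := int_bound hγ0 hγ1 hσ0 hα0 hθ hC₀ hz0 hz (K k) (w k) hk ht hKc hwc (hK k hk)
      hSw0 (fun s hs => hw s hs k hk)
  have htri : ‖ρ k t‖ ≤ ‖a k t‖ +
      ‖∫ s in (0:ℝ)..t, K k (t - s) * a k s‖ +
      ‖∫ s in (0:ℝ)..t, K k (t - s) * w k s‖ := by
    rw [hres k hk t ht]
    calc ‖a k t + (∫ s in (0:ℝ)..t, K k (t - s) * a k s) -
          ∫ s in (0:ℝ)..t, K k (t - s) * w k s‖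
        ≤ ‖a k t + (∫ s in (0:ℝ)..t, K k (t - s) * a k s)‖ +
          ‖∫ s in (0:ℝ)..t, K k (t - s) * w k s‖ := norm_sub_le _ _
      _ ≤ _ := by
          have := norm_add_le (a k t) (∫ s in (0:ℝ)..t, K k (t - s) * a k s)
          linarith
  have hmain : W γ σ α z t k * ‖ρ k t‖ ≤ Sa + D * Sa + D * Sw := by
    have h := mul_le_mul_of_nonneg_left htri hWt.le
    rw [mul_add, mul_add] at h
    rw [hDd]
    linarith [hWa, hI1, hI2]
  nlinarith [hmain, hSa0, hSw0, hD0]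
end

section
/- Let λ₁ > 0, θ₁ > 0 and γ ∈ (0,1], and set ν := min{θ₁/8, λ₁/4}. There exists a constant C > 0, depending only on λ₁, θ₁ and γ, such that for every t ≥ 0, ∫₀^t exp(−(θ₁/4)·(t−s))·exp(−(λ₁/2)·(1+s²)^{γ/2}) ds ≤ C·exp(−ν·t^γ). -/
open Real

private lemma aux_pow_div_factorial_le_exp (x : ℝ) (hx : 0 ≤ x) (n : ℕ) :
    x ^ n / n.factorial ≤ Real.exp x := by
  have h := Real.sum_le_exp_of_nonneg hx (n + 1)
  refine le_trans ?_ h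
  have heq : x ^ n / n.factorial = ∑ i ∈ Finset.range (n + 1),
      (if i = n then x ^ n / (n.factorial : ℝ) else 0) := by
    simp
  rw [heq]
  refine Finset.sum_le_sum fun i hi => ?_
  split_ifs with h'
  · subst h'; exact le_refl _
  · positivity

set_option maxHeartbeats 1600000

/-- `∫₀^t e^{−θ₁(t−s)/4}·e^{−(λ₁/2)⟨s⟩^γ} ds ≤ C·e^{−ν t^γ}` with `ν = min{θ₁/8, λ₁/4}`:
stretched-exponential (Gevrey) time decay is propagated through the exponentially
decaying resolvent kernel. -/
theorem gevrey_decay_convolution {lam₁ θ₁ γ : ℝ} (hlam : 0 < lam₁) (hθ : 0 < θ₁)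
    (hγ0 : 0 < γ) (hγ1 : γ ≤ 1) :
    ∃ C : ℝ, 0 < C ∧ ∀ t : ℝ, 0 ≤ t →
      (∫ s in (0 : ℝ)..t,
          Real.exp (-(θ₁ / 4) * (t - s)) *
            Real.exp (-(lam₁ / 2) * (1 + s ^ 2) ^ (γ / 2))) ≤
        C * Real.exp (-(min (θ₁ / 8) (lam₁ / 4)) * t ^ γ) := by
  set ν := min (θ₁ / 8) (lam₁ / 4) with hνdef
  have hν8 : ν ≤ θ₁ / 8 := min_le_left _ _
  have hν4 : ν ≤ lam₁ / 4 := min_le_right _ _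
  have hνpos : 0 < ν := lt_min (by positivity) (by positivity)
  set c : ℝ := lam₁ / 2 with hcdef
  have hcpos : 0 < c := by positivity
  obtain ⟨n, hnγ⟩ : ∃ n : ℕ, (2 : ℝ) ≤ (n : ℝ) * γ := by
    refine ⟨⌈2 / γ⌉₊, ?_⟩
    have h1 : (2 / γ : ℝ) ≤ (⌈2 / γ⌉₊ : ℝ) := Nat.le_ceil _
    have := mul_le_mul_of_nonneg_right h1 hγ0.le
    rwa [div_mul_cancel₀ _ (ne_of_gt hγ0)] at this
  set b : ℝ := (n.factorial : ℝ) / c ^ n with hbdef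
  have hbpos : 0 < b := by positivity
  have hfac : (0 : ℝ) < (n.factorial : ℝ) := by positivity
  -- key pointwise bound : e^{-(lam₁/2) (1+s²)^{γ/2}} ≤ b / (1+s²)
  have keyA : ∀ s : ℝ, Real.exp (-(lam₁ / 2) * (1 + s ^ 2) ^ (γ / 2)) ≤ b / (1 + s ^ 2) := by
    intro s
    have h1s : (0 : ℝ) < 1 + s ^ 2 := by positivity
    have h1s' : (1 : ℝ) ≤ 1 + s ^ 2 := by nlinarith [sq_nonneg s]
    have hlow : (1 + s ^ 2) / b ≤ Real.exp (c * (1 + s ^ 2) ^ (γ / 2)) := by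
      have h1 : (c * (1 + s ^ 2) ^ (γ / 2)) ^ n / n.factorial ≤
          Real.exp (c * (1 + s ^ 2) ^ (γ / 2)) :=
        aux_pow_div_factorial_le_exp _ (by positivity) n
      have h2 : ((1 + s ^ 2) ^ (γ / 2)) ^ n = (1 + s ^ 2) ^ (γ / 2 * n) := by
        rw [← Real.rpow_natCast ((1 + s ^ 2) ^ (γ / 2)) n, ← Real.rpow_mul (by positivity)]
      have h3 : (1 + s ^ 2 : ℝ) ≤ (1 + s ^ 2) ^ (γ / 2 * n) := by
        nth_rewrite 1 [show (1 + s ^ 2 : ℝ) = (1 + s ^ 2) ^ (1 : ℝ) from (Real.rpow_one _).symm]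
        exact Real.rpow_le_rpow_of_exponent_le h1s' (by nlinarith)
      calc (1 + s ^ 2) / b
          = (c ^ n / n.factorial) * (1 + s ^ 2) := by
            rw [hbdef]; field_simp
        _ ≤ (c ^ n / n.factorial) * ((1 + s ^ 2) ^ (γ / 2 * n)) :=
            mul_le_mul_of_nonneg_left h3 (by positivity)
        _ = (c * (1 + s ^ 2) ^ (γ / 2)) ^ n / n.factorial := by
            rw [mul_pow, h2]; ring
        _ ≤ Real.exp (c * (1 + s ^ 2) ^ (γ / 2)) := h1
    have hc' : -(lam₁ / 2) * (1 + s ^ 2) ^ (γ / 2) = -(c * (1 + s ^ 2) ^ (γ / 2)) := by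
      rw [hcdef]; ring
    rw [hc', Real.exp_neg]
    have := one_div_le_one_div_of_le (by positivity : (0:ℝ) < (1 + s ^ 2) / b) hlow
    rw [one_div, one_div_div] at this
    exact this
  -- continuity of the integrand ingredients
  have hcont2 : Continuous fun s : ℝ => Real.exp (-(lam₁ / 2) * (1 + s ^ 2) ^ (γ / 2)) := by
    apply Real.continuous_exp.comp
    apply Continuous.mul continuous_const
    apply Continuous.rpow_const (by continuity)
    intro x; left; positivity
  have hCpos : 0 < Real.exp (θ₁ / 8) * (π / 2) * b + 4 / θ₁ :=
    add_pos (mul_pos (mul_pos (Real.exp_pos _) (by positivity)) hbpos) (by positivity)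
  refine ⟨Real.exp (θ₁ / 8) * (π / 2) * b + 4 / θ₁, hCpos, ?_⟩
  intro t ht
  have htγ : (0 : ℝ) ≤ t ^ γ := Real.rpow_nonneg ht _
  have hcont1 : Continuous fun s : ℝ => Real.exp (-(θ₁ / 4) * (t - s)) := by
    apply Real.continuous_exp.comp; continuity
  have hcontf : Continuous fun s : ℝ =>
      Real.exp (-(θ₁ / 4) * (t - s)) * Real.exp (-(lam₁ / 2) * (1 + s ^ 2) ^ (γ / 2)) :=
    hcont1.mul hcont2
  -- split the integral at t/2
  have hsplit :
      (∫ s in (0 : ℝ)..t, Real.exp (-(θ₁ / 4) * (t - s)) *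
        Real.exp (-(lam₁ / 2) * (1 + s ^ 2) ^ (γ / 2)))
      = (∫ s in (0 : ℝ)..t/2, Real.exp (-(θ₁ / 4) * (t - s)) *
          Real.exp (-(lam₁ / 2) * (1 + s ^ 2) ^ (γ / 2)))
        + ∫ s in (t/2 : ℝ)..t, Real.exp (-(θ₁ / 4) * (t - s)) *
            Real.exp (-(lam₁ / 2) * (1 + s ^ 2) ^ (γ / 2)) := by
    rw [intervalIntegral.integral_add_adjacent_intervals
      (hcontf.intervalIntegrable _ _) (hcontf.intervalIntegrable _ _)]
  rw [hsplit]
  -- t ^ γ ≤ 1 + t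
  have htγle : t ^ γ ≤ 1 + t := by
    rcases le_total t 1 with h | h
    · have : t ^ γ ≤ 1 := Real.rpow_le_one ht h hγ0.le
      linarith
    · have h1 : t ^ γ ≤ t ^ (1:ℝ) := Real.rpow_le_rpow_of_exponent_le h hγ1
      rw [Real.rpow_one] at h1; linarith
  -- Part 1 : ∫₀^{t/2} ≤ exp(θ₁/8) * (π/2) * b * exp(-ν t^γ)
  have hpart1 :
      (∫ s in (0 : ℝ)..t/2, Real.exp (-(θ₁ / 4) * (t - s)) *
        Real.exp (-(lam₁ / 2) * (1 + s ^ 2) ^ (γ / 2)))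
      ≤ Real.exp (θ₁ / 8) * (π / 2) * b * Real.exp (-ν * t ^ γ) := by
    have hmono : (∫ s in (0 : ℝ)..t/2, Real.exp (-(θ₁ / 4) * (t - s)) *
          Real.exp (-(lam₁ / 2) * (1 + s ^ 2) ^ (γ / 2)))
        ≤ ∫ s in (0 : ℝ)..t/2, Real.exp (-(θ₁ / 8) * t) * b * (1 / (1 + s ^ 2)) := by
      apply intervalIntegral.integral_mono_on (by linarith)
        (hcontf.intervalIntegrable _ _)
      · apply Continuous.intervalIntegrable
        apply Continuous.mul continuous_const
        apply Continuous.div continuous_const (by continuity)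
        intro x; positivity
      · intro s hs
        have hs1 : 0 ≤ s := hs.1
        have hs2 : s ≤ t / 2 := hs.2
        have h1s : (0 : ℝ) < 1 + s ^ 2 := by positivity
        have hexp1 : Real.exp (-(θ₁ / 4) * (t - s)) ≤ Real.exp (-(θ₁ / 8) * t) := by
          apply Real.exp_le_exp.mpr; nlinarith
        have hstep : Real.exp (-(θ₁ / 4) * (t - s)) *
              Real.exp (-(lam₁ / 2) * (1 + s ^ 2) ^ (γ / 2))
            ≤ Real.exp (-(θ₁ / 8) * t) * (b / (1 + s ^ 2)) :=
          mul_le_mul hexp1 (keyA s) (Real.exp_nonneg _) (Real.exp_nonneg _)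
        calc Real.exp (-(θ₁ / 4) * (t - s)) * Real.exp (-(lam₁ / 2) * (1 + s ^ 2) ^ (γ / 2))
            ≤ Real.exp (-(θ₁ / 8) * t) * (b / (1 + s ^ 2)) := hstep
          _ = Real.exp (-(θ₁ / 8) * t) * b * (1 / (1 + s ^ 2)) := by ring
    have hcomp : (∫ s in (0 : ℝ)..t/2, Real.exp (-(θ₁ / 8) * t) * b * (1 / (1 + s ^ 2)))
        = Real.exp (-(θ₁ / 8) * t) * b * (Real.arctan (t/2) - Real.arctan 0) := by
      rw [intervalIntegral.integral_const_mul, integral_one_div_one_add_sq]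
    have harctan : Real.arctan (t/2) - Real.arctan 0 ≤ π / 2 := by
      rw [Real.arctan_zero, sub_zero]
      exact (Real.arctan_lt_pi_div_two _).le
    have hexpbound : Real.exp (-(θ₁ / 8) * t) ≤ Real.exp (θ₁ / 8) * Real.exp (-ν * t ^ γ) := by
      rw [← Real.exp_add]
      apply Real.exp_le_exp.mpr
      have h1 : ν * t ^ γ ≤ (θ₁ / 8) * (1 + t) := by
        calc ν * t ^ γ ≤ (θ₁ / 8) * t ^ γ := mul_le_mul_of_nonneg_right hν8 htγ
          _ ≤ (θ₁ / 8) * (1 + t) := mul_le_mul_of_nonneg_left htγle (by positivity)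
      linarith only [h1]
    calc (∫ s in (0 : ℝ)..t/2, Real.exp (-(θ₁ / 4) * (t - s)) *
            Real.exp (-(lam₁ / 2) * (1 + s ^ 2) ^ (γ / 2)))
        ≤ Real.exp (-(θ₁ / 8) * t) * b * (Real.arctan (t/2) - Real.arctan 0) := by
          rw [← hcomp]; exact hmono
      _ ≤ Real.exp (-(θ₁ / 8) * t) * b * (π / 2) := by
          exact mul_le_mul_of_nonneg_left harctan
            (mul_nonneg (Real.exp_nonneg _) hbpos.le)
      _ ≤ (Real.exp (θ₁ / 8) * Real.exp (-ν * t ^ γ)) * b * (π / 2) := by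
          exact mul_le_mul_of_nonneg_right
            (mul_le_mul_of_nonneg_right hexpbound hbpos.le) (by positivity)
      _ = Real.exp (θ₁ / 8) * (π / 2) * b * Real.exp (-ν * t ^ γ) := by ring
  -- the exact value of ∫_{t/2}^t exp(-(θ₁/4)(t-s)) ds
  have hexact : (∫ s in (t/2 : ℝ)..t, Real.exp (-(θ₁ / 4) * (t - s)))
      = (4 / θ₁) * Real.exp (-(θ₁ / 4) * (t - t)) -
        (4 / θ₁) * Real.exp (-(θ₁ / 4) * (t - t/2)) := by
    apply intervalIntegral.integral_eq_sub_of_hasDerivAt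
      (f := fun s => (4 / θ₁) * Real.exp (-(θ₁ / 4) * (t - s)))
    · intro s hs
      have h0 : HasDerivAt (fun s : ℝ => t - s) (0 - 1) s :=
        (hasDerivAt_const s t).sub (hasDerivAt_id s)
      have h1 : HasDerivAt (fun s : ℝ => -(θ₁ / 4) * (t - s)) (θ₁ / 4) s := by
        have := h0.const_mul (-(θ₁ / 4))
        exact this.congr_deriv (by ring)
      have h2 := (h1.exp).const_mul (4 / θ₁)
      refine h2.congr_deriv ?_
      have hθ' : θ₁ ≠ 0 := ne_of_gt hθ
      field_simp
    · exact (hcont1.intervalIntegrable _ _)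
  -- Part 2 : ∫_{t/2}^t ≤ (4/θ₁) * exp(-ν t^γ)
  have hpart2 :
      (∫ s in (t/2 : ℝ)..t, Real.exp (-(θ₁ / 4) * (t - s)) *
        Real.exp (-(lam₁ / 2) * (1 + s ^ 2) ^ (γ / 2)))
      ≤ (4 / θ₁) * Real.exp (-ν * t ^ γ) := by
    have hmono : (∫ s in (t/2 : ℝ)..t, Real.exp (-(θ₁ / 4) * (t - s)) *
          Real.exp (-(lam₁ / 2) * (1 + s ^ 2) ^ (γ / 2)))
        ≤ ∫ s in (t/2 : ℝ)..t, Real.exp (-(θ₁ / 4) * (t - s)) * Real.exp (-ν * t ^ γ) := by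
      apply intervalIntegral.integral_mono_on (by linarith)
        (hcontf.intervalIntegrable _ _)
        ((hcont1.mul continuous_const).intervalIntegrable _ _)
      intro s hs
      have hs1 : t / 2 ≤ s := hs.1
      have hs0 : 0 ≤ s := le_trans (by linarith) hs1
      apply mul_le_mul_of_nonneg_left _ (Real.exp_nonneg _)
      apply Real.exp_le_exp.mpr
      -- need : -(lam₁/2) * (1+s²)^{γ/2} ≤ -ν * t^γ
      have key : ν * t ^ γ ≤ (lam₁ / 2) * (1 + s ^ 2) ^ (γ / 2) := by
        have h1 : (t/2) ^ γ ≤ (1 + s ^ 2) ^ (γ / 2) := by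
          have ha : (t/2) ^ 2 ≤ 1 + s ^ 2 := by nlinarith
          have hb : ((t/2) ^ 2 : ℝ) ^ (γ / 2) ≤ (1 + s ^ 2) ^ (γ / 2) :=
            Real.rpow_le_rpow (by positivity) ha (by positivity)
          have hc2 : ((t/2) ^ 2 : ℝ) ^ (γ / 2) = (t/2) ^ γ := by
            rw [← Real.rpow_natCast (t/2) 2, ← Real.rpow_mul (by positivity),
              show ((2:ℕ):ℝ) * (γ/2) = γ by push_cast; ring]
          rwa [hc2] at hb
        have h2 : t ^ γ / 2 ≤ (t/2) ^ γ := by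
          rw [Real.div_rpow ht (by norm_num)]
          apply div_le_div_of_nonneg_left htγ (by positivity)
          calc (2:ℝ) ^ γ ≤ 2 ^ (1:ℝ) :=
                Real.rpow_le_rpow_of_exponent_le (by norm_num) hγ1
            _ = 2 := Real.rpow_one 2
        calc ν * t ^ γ ≤ (lam₁ / 4) * t ^ γ := mul_le_mul_of_nonneg_right hν4 htγ
          _ = (lam₁ / 2) * (t ^ γ / 2) := by ring
          _ ≤ (lam₁ / 2) * ((t/2) ^ γ) := mul_le_mul_of_nonneg_left h2 (by positivity)
          _ ≤ (lam₁ / 2) * ((1 + s ^ 2) ^ (γ / 2)) :=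
              mul_le_mul_of_nonneg_left h1 (by positivity)
      linarith
    have hval : (∫ s in (t/2 : ℝ)..t, Real.exp (-(θ₁ / 4) * (t - s)) * Real.exp (-ν * t ^ γ))
        ≤ (4 / θ₁) * Real.exp (-ν * t ^ γ) := by
      rw [intervalIntegral.integral_mul_const, hexact]
      have : (4 / θ₁) * Real.exp (-(θ₁ / 4) * (t - t)) -
          (4 / θ₁) * Real.exp (-(θ₁ / 4) * (t - t/2)) ≤ 4 / θ₁ := by
        have h1 : Real.exp (-(θ₁ / 4) * (t - t)) = 1 := by simp
        have h2 : 0 ≤ (4 / θ₁) * Real.exp (-(θ₁ / 4) * (t - t/2)) := by positivity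
        rw [h1, mul_one]; linarith
      exact mul_le_mul_of_nonneg_right this (Real.exp_nonneg _)
    exact hmono.trans hval
  calc (∫ s in (0 : ℝ)..t/2, Real.exp (-(θ₁ / 4) * (t - s)) *
          Real.exp (-(lam₁ / 2) * (1 + s ^ 2) ^ (γ / 2)))
        + (∫ s in (t/2 : ℝ)..t, Real.exp (-(θ₁ / 4) * (t - s)) *
            Real.exp (-(lam₁ / 2) * (1 + s ^ 2) ^ (γ / 2)))
      ≤ Real.exp (θ₁ / 8) * (π / 2) * b * Real.exp (-ν * t ^ γ)
        + (4 / θ₁) * Real.exp (-ν * t ^ γ) := add_le_add hpart1 hpart2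
    _ = (Real.exp (θ₁ / 8) * (π / 2) * b + 4 / θ₁) * Real.exp (-ν * t ^ γ) := by ring
end

section
/- Let γ ∈ (0,1], r₀ > 0 and θ₀ > 0. There exists a constant C > 0, depending only on γ, r₀ and θ₀, such that for every k ∈ ℤ³ with k ≠ 0 and every η ∈ ℝ³, ∫₀^∞ exp(−r₀·|s·k|^γ)·exp(−θ₀·|η − s·k|) ds ≤ C·exp(−(r₀/2)·|η|^γ) + C·exp(−(θ₀/2)·|η|), where |·| denotes the Euclidean norm on ℝ³ and s·k is the scalar multiple of the lattice vector k. -/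
/-- A lattice point `k ∈ ℤ³` viewed as a vector of `ℝ³`. -/
noncomputable def kv (k : Fin 3 → ℤ) : EuclideanSpace ℝ (Fin 3) :=
  (WithLp.equiv 2 (Fin 3 → ℝ)).symm (fun i => (k i : ℝ))

open Real Set MeasureTheory

/-- Subadditivity of `x ↦ x ^ γ` for `0 ≤ γ ≤ 1`. -/
lemma echo_rpow_subadd {a b γ : ℝ} (ha : 0 ≤ a) (hb : 0 ≤ b) (h0 : 0 ≤ γ) (h1 : γ ≤ 1) :
    (a + b) ^ γ ≤ a ^ γ + b ^ γ := by
  have h := NNReal.rpow_add_le_add_rpow a.toNNReal b.toNNReal h0 h1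
  have h2 := NNReal.coe_le_coe.mpr h
  push_cast [← Real.toNNReal_add ha hb] at h2
  simpa [Real.coe_toNNReal _ ha, Real.coe_toNNReal _ hb,
    Real.coe_toNNReal _ (add_nonneg ha hb)] using h2

/-- A nonzero integer lattice vector has norm at least one. -/
lemma echo_one_le_norm_kv (k : Fin 3 → ℤ) (hk : k ≠ 0) : 1 ≤ ‖kv k‖ := by
  obtain ⟨i, hi⟩ := Function.ne_iff.mp hk
  have hnorm : ‖kv k‖ = Real.sqrt (∑ j, ‖(k j : ℝ)‖ ^ 2) := by
    rw [EuclideanSpace.norm_eq]; rfl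
  rw [hnorm, show (1:ℝ) = Real.sqrt 1 by simp]
  apply Real.sqrt_le_sqrt
  have h3 : (1 : ℝ) ≤ ‖(k i : ℝ)‖ ^ 2 := by
    have : (1 : ℝ) ≤ |(k i : ℝ)| := by
      rw [← Int.cast_abs]; exact_mod_cast Int.one_le_abs (by simpa using hi)
    rw [Real.norm_eq_abs]; nlinarith
  calc (1:ℝ) ≤ ‖(k i : ℝ)‖ ^ 2 := h3
    _ ≤ ∑ j, ‖(k j : ℝ)‖ ^ 2 :=
      Finset.single_le_sum (f := fun j => ‖(k j : ℝ)‖ ^ 2)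
        (fun j _ => by positivity) (Finset.mem_univ i)

/-- Distance from `η` to a point of the line `ℝ·v` dominates the distance of the
projections onto the line. -/
lemma echo_proj_le (v η : EuclideanSpace ℝ (Fin 3)) (hv : 1 ≤ ‖v‖) (s : ℝ) :
    ‖v‖ * |inner (𝕜 := ℝ) η v / ‖v‖ ^ 2 - s| ≤ ‖η - s • v‖ := by
  have hv0 : (0:ℝ) < ‖v‖ := lt_of_lt_of_le one_pos hv
  have key : inner (𝕜 := ℝ) (η - s • v) v = ‖v‖^2 * (inner (𝕜 := ℝ) η v / ‖v‖ ^ 2 - s) := by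
    rw [inner_sub_left, real_inner_smul_left, real_inner_self_eq_norm_sq]
    field_simp
  have cs := abs_real_inner_le_norm (η - s • v) v
  rw [key, abs_mul, abs_of_nonneg (by positivity : (0:ℝ) ≤ ‖v‖^2)] at cs
  have h2 : ‖v‖ * (‖v‖ * |inner (𝕜 := ℝ) η v / ‖v‖ ^ 2 - s|) ≤ ‖v‖ * ‖η - s • v‖ := by
    nlinarith [abs_nonneg (inner (𝕜 := ℝ) η v / ‖v‖ ^ 2 - s)]
  exact le_of_mul_le_mul_left h2 hv0

/-- The stretched exponential is integrable on `(0, ∞)` for any exponent `0 < γ`. -/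
lemma echo_integrable_exp_rpow {γ b : ℝ} (hγ0 : 0 < γ) (hb : 0 < b) :
    IntegrableOn (fun s : ℝ => Real.exp (-b * s ^ γ)) (Ioi 0) := by
  have hp : (1:ℝ)/γ ≠ 0 := by positivity
  have h1 : IntegrableOn (fun x : ℝ => x ^ ((1:ℝ)/γ - 1) * Real.exp (-b * x ^ (1:ℝ)))
      (Ioi 0) := integrableOn_rpow_mul_exp_neg_mul_rpow (by simp; positivity) zero_lt_one hb
  have h2 : IntegrableOn
      (fun x : ℝ => x ^ ((1:ℝ)/γ - 1) •
        (fun s : ℝ => Real.exp (-b * s ^ γ)) (x ^ ((1:ℝ)/γ))) (Ioi 0) := by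
    refine h1.congr_fun (fun x hx => ?_) measurableSet_Ioi
    have hx0 : (0:ℝ) ≤ x := le_of_lt hx
    simp only [smul_eq_mul]
    rw [← Real.rpow_mul hx0, one_div, inv_mul_cancel₀ (ne_of_gt hγ0),
      Real.rpow_one]
  exact (integrableOn_Ioi_comp_rpow_iff' _ hp).mp h2

/-- The two-sided exponential is integrable. -/
lemma echo_integrable_exp_abs {b : ℝ} (hb : 0 < b) :
    Integrable (fun u : ℝ => Real.exp (-b * |u|)) := by
  have hf : IntegrableOn (fun x : ℝ => Real.exp (-b * |x|)) (Ioi 0) := by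
    refine (exp_neg_integrableOn_Ioi 0 hb).congr_fun (fun x hx => ?_) measurableSet_Ioi
    rw [abs_of_pos hx]
  have int_Iic : IntegrableOn (fun x : ℝ => Real.exp (-b * |x|)) (Iic 0) := by
    rw [← Measure.map_neg_eq_self (volume : Measure ℝ)]
    have m : MeasurableEmbedding fun x : ℝ => -x := (Homeomorph.neg ℝ).measurableEmbedding
    rw [m.integrableOn_map_iff]
    simp_rw [Function.comp_def, abs_neg, neg_preimage, neg_Iic, neg_zero]
    exact Iff.mpr integrableOn_Ici_iff_integrableOn_Ioi hf
  rw [← integrableOn_univ, ← Iic_union_Ioi (a := (0:ℝ))]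
  exact int_Iic.union hf

/-- Value of the two-sided exponential integral. -/
lemma echo_integral_exp_abs {b : ℝ} (hb : 0 < b) :
    (∫ u : ℝ, Real.exp (-b * |u|)) = 2 / b := by
  rw [integral_comp_abs (f := fun u => Real.exp (-b * u))]
  have h0 : (∫ x in Ioi (0:ℝ), Real.exp (-b * x)) = 1/b := by
    have h := integral_exp_neg_mul_rpow zero_lt_one hb
    simp only [Real.rpow_one] at h
    rw [h, show (1:ℝ)/1 + 1 = 2 by norm_num, Real.Gamma_two,
      show (-1:ℝ)/1 = -1 by norm_num, Real.rpow_neg_one]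
    ring
  rw [h0]; ring

/-- `∫₀^∞ e^{−r₀|sk|^γ}·e^{−θ₀|η−sk|} ds ≤ C·e^{−(r₀/2)|η|^γ} + C·e^{−(θ₀/2)|η|}`:
the echo integral inherits Gevrey decay in `η`. -/
theorem echo_integral_decay {γ r₀ θ₀ : ℝ} (hγ0 : 0 < γ) (hγ1 : γ ≤ 1)
    (hr : 0 < r₀) (hθ : 0 < θ₀) :
    ∃ C : ℝ, 0 < C ∧ ∀ k : Fin 3 → ℤ, k ≠ 0 → ∀ η : EuclideanSpace ℝ (Fin 3),
      (∫ s in Set.Ioi (0 : ℝ),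
          Real.exp (-r₀ * ‖s • kv k‖ ^ γ) * Real.exp (-θ₀ * ‖η - s • kv k‖)) ≤
        C * Real.exp (-(r₀ / 2) * ‖η‖ ^ γ) + C * Real.exp (-(θ₀ / 2) * ‖η‖) := by
  have hr2 : (0:ℝ) < r₀ / 2 := by linarith
  have hKint : IntegrableOn (fun s : ℝ => Real.exp (-(r₀/2) * s ^ γ)) (Ioi 0) :=
    echo_integrable_exp_rpow hγ0 hr2
  set K : ℝ := ∫ s in Ioi (0:ℝ), Real.exp (-(r₀/2) * s ^ γ) with hKdef
  have hK0 : 0 ≤ K := setIntegral_nonneg measurableSet_Ioi fun s _ => (Real.exp_pos _).le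
  refine ⟨K + 2/θ₀ + 1, by positivity, ?_⟩
  intro k hk η
  set v : EuclideanSpace ℝ (Fin 3) := kv k with hvdef
  have hv : 1 ≤ ‖v‖ := echo_one_le_norm_kv k hk
  set c : ℝ := inner (𝕜 := ℝ) η v / ‖v‖ ^ 2 with hcdef
  have hproj : ∀ s : ℝ, |c - s| ≤ ‖η - s • v‖ := by
    intro s
    have h1 := echo_proj_le v η hv s
    nlinarith [abs_nonneg (c - s)]
  set f1 : ℝ → ℝ := fun s => Real.exp (-(r₀/2) * s ^ γ) * Real.exp (-(θ₀/2) * ‖η‖)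
    with hf1def
  set f2 : ℝ → ℝ := fun s => Real.exp (-(r₀/2) * ‖η‖ ^ γ) * Real.exp (-θ₀ * |c - s|)
    with hf2def
  -- the pointwise bound
  have hptwise : ∀ s ∈ Ioi (0:ℝ),
      Real.exp (-r₀ * ‖s • v‖ ^ γ) * Real.exp (-θ₀ * ‖η - s • v‖) ≤ f1 s + f2 s := by
    intro s hs
    have hs0 : (0:ℝ) < s := hs
    have ha : ‖s • v‖ = s * ‖v‖ := by
      rw [norm_smul, Real.norm_eq_abs, abs_of_pos hs0]
    have haS : s ≤ ‖s • v‖ := by rw [ha]; nlinarith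
    have ha0 : 0 ≤ ‖s • v‖ := norm_nonneg _
    have hb0 : 0 ≤ ‖η - s • v‖ := norm_nonneg _
    have hab : ‖η‖ ≤ ‖s • v‖ + ‖η - s • v‖ := by
      calc ‖η‖ = ‖s • v + (η - s • v)‖ := by congr 1; abel
        _ ≤ ‖s • v‖ + ‖η - s • v‖ := norm_add_le _ _
    have hexpa : 0 ≤ ‖s • v‖ ^ γ := Real.rpow_nonneg ha0 _
    rcases le_or_gt (‖η‖/2) ‖η - s • v‖ with hcase | hcase
    · have hsa : s ^ γ ≤ ‖s • v‖ ^ γ := Real.rpow_le_rpow hs0.le haS hγ0.le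
      have e1 : Real.exp (-r₀ * ‖s • v‖ ^ γ) ≤ Real.exp (-(r₀/2) * s ^ γ) :=
        Real.exp_le_exp.mpr (by nlinarith)
      have e2 : Real.exp (-θ₀ * ‖η - s • v‖) ≤ Real.exp (-(θ₀/2) * ‖η‖) :=
        Real.exp_le_exp.mpr (by nlinarith)
      have hle : Real.exp (-r₀ * ‖s • v‖ ^ γ) * Real.exp (-θ₀ * ‖η - s • v‖) ≤ f1 s :=
        mul_le_mul e1 e2 (Real.exp_pos _).le (Real.exp_pos _).le
      have h2pos : 0 ≤ f2 s := by positivity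
      linarith
    · have hba : ‖η - s • v‖ < ‖s • v‖ := by linarith
      have hsub : ‖η‖ ^ γ ≤ 2 * ‖s • v‖ ^ γ := by
        have h1 : ‖η‖ ^ γ ≤ (‖s • v‖ + ‖η - s • v‖) ^ γ :=
          Real.rpow_le_rpow (norm_nonneg _) hab hγ0.le
        have h2 : (‖s • v‖ + ‖η - s • v‖) ^ γ ≤ ‖s • v‖ ^ γ + ‖η - s • v‖ ^ γ :=
          echo_rpow_subadd ha0 hb0 hγ0.le hγ1
        have h3 : ‖η - s • v‖ ^ γ ≤ ‖s • v‖ ^ γ :=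
          Real.rpow_le_rpow hb0 hba.le hγ0.le
        linarith
      have e1 : Real.exp (-r₀ * ‖s • v‖ ^ γ) ≤ Real.exp (-(r₀/2) * ‖η‖ ^ γ) :=
        Real.exp_le_exp.mpr (by nlinarith)
      have e2 : Real.exp (-θ₀ * ‖η - s • v‖) ≤ Real.exp (-θ₀ * |c - s|) :=
        Real.exp_le_exp.mpr (by nlinarith [hproj s])
      have hle : Real.exp (-r₀ * ‖s • v‖ ^ γ) * Real.exp (-θ₀ * ‖η - s • v‖) ≤ f2 s :=
        mul_le_mul e1 e2 (Real.exp_pos _).le (Real.exp_pos _).le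
      have h1pos : 0 ≤ f1 s := by positivity
      linarith
  -- integrability of the bounds
  have hf1int : IntegrableOn f1 (Ioi 0) := hKint.mul_const _
  have habs : Integrable (fun s : ℝ => Real.exp (-θ₀ * |c - s|)) := by
    have := (echo_integrable_exp_abs hθ).comp_sub_right c
    refine this.congr (Filter.Eventually.of_forall fun s => ?_)
    simp [abs_sub_comm]
  have hf2int : IntegrableOn f2 (Ioi 0) := (habs.const_mul _).integrableOn
  -- comparison
  have hmono : (∫ s in Ioi (0:ℝ),
      Real.exp (-r₀ * ‖s • v‖ ^ γ) * Real.exp (-θ₀ * ‖η - s • v‖)) ≤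
      ∫ s in Ioi (0:ℝ), (f1 s + f2 s) := by
    refine integral_mono_of_nonneg (Filter.Eventually.of_forall fun s => by positivity)
      (hf1int.add hf2int) ?_
    rw [Filter.EventuallyLE, ae_restrict_iff' measurableSet_Ioi]
    exact Filter.Eventually.of_forall hptwise
  have hsplit : (∫ s in Ioi (0:ℝ), (f1 s + f2 s)) =
      (∫ s in Ioi (0:ℝ), f1 s) + ∫ s in Ioi (0:ℝ), f2 s :=
    integral_add hf1int hf2int
  have hI1 : (∫ s in Ioi (0:ℝ), f1 s) = K * Real.exp (-(θ₀/2) * ‖η‖) := by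
    rw [hf1def, integral_mul_const]
  have hI2 : (∫ s in Ioi (0:ℝ), f2 s) ≤ Real.exp (-(r₀/2) * ‖η‖ ^ γ) * (2/θ₀) := by
    rw [hf2def]
    simp only [integral_const_mul]
    have h1 : (∫ s in Ioi (0:ℝ), Real.exp (-θ₀ * |c - s|)) ≤
        ∫ s : ℝ, Real.exp (-θ₀ * |c - s|) :=
      setIntegral_le_integral habs (Filter.Eventually.of_forall fun s => (Real.exp_pos _).le)
    have h2 : (∫ s : ℝ, Real.exp (-θ₀ * |c - s|)) = 2/θ₀ := by
      have h3 : (∫ s : ℝ, Real.exp (-θ₀ * |c - s|)) =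
          ∫ s : ℝ, Real.exp (-θ₀ * |s - c|) := by
        congr 1; ext s; rw [abs_sub_comm]
      rw [h3, integral_sub_right_eq_self (fun u : ℝ => Real.exp (-θ₀ * |u|)) c,
        echo_integral_exp_abs hθ]
    exact mul_le_mul_of_nonneg_left (h1.trans h2.le) (Real.exp_pos _).le
  have e1p : (0:ℝ) < Real.exp (-(r₀ / 2) * ‖η‖ ^ γ) := Real.exp_pos _
  have e2p : (0:ℝ) < Real.exp (-(θ₀ / 2) * ‖η‖) := Real.exp_pos _
  have hθ2 : (0:ℝ) < 2/θ₀ := by positivity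
  calc (∫ s in Ioi (0:ℝ),
        Real.exp (-r₀ * ‖s • v‖ ^ γ) * Real.exp (-θ₀ * ‖η - s • v‖))
      ≤ (∫ s in Ioi (0:ℝ), f1 s) + ∫ s in Ioi (0:ℝ), f2 s := by
        rw [← hsplit]; exact hmono
    _ ≤ K * Real.exp (-(θ₀/2) * ‖η‖) + Real.exp (-(r₀/2) * ‖η‖ ^ γ) * (2/θ₀) := by
        rw [hI1]; linarith [hI2]
    _ ≤ (K + 2/θ₀ + 1) * Real.exp (-(r₀ / 2) * ‖η‖ ^ γ) +
        (K + 2/θ₀ + 1) * Real.exp (-(θ₀ / 2) * ‖η‖) := by nlinarith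
end
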